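/- For every integer n ≥ 1, A_{n,1} = [w−1]_{n−1}·ℂ[w]; that is, the linear span of {f(w−1)·[w−1]_n − f(w)·[w]_n : f ∈ ℂ[w]} equals the principal ideal of ℂ[w] generated by (w−1)(w−2)⋯(w−n+1). -/

import Mathlib

open Polynomial

/-- The falling-factorial polynomial `[w]_n = w(w−1)⋯(w−n+1)` (with `[w]_0 = 1`). -/
noncomputable def ffp (n : ℕ) : ℂ[X] :=
  ∏ i ∈ Finset.range n, (X - C (i : ℂ))

/-- `A_{n,k}`: the ℂ-linear span of `{f(w−k)·[w−k]_n − f(w)·[w]_n : f ∈ ℂ[w]}`. -/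
noncomputable def Ank (n k : ℕ) : Submodule ℂ ℂ[X] :=
  Submodule.span ℂ
    {p | ∃ f : ℂ[X],
      p = f.comp (X - C (k : ℂ)) * (ffp n).comp (X - C (k : ℂ)) - f * ffp n}

namespace Stmt10Aux

/-- The "first difference" auxiliary operator. -/
noncomputable def T (n : ℕ) (f : ℂ[X]) : ℂ[X] :=
  f.comp (X - C 1) * (X - C (n : ℂ)) - f * X

lemma comp_ffp (m : ℕ) :
    (ffp m).comp (X - C (1 : ℂ)) = ∏ i ∈ Finset.range m, (X - C ((i : ℂ) + 1)) := by
  rw [ffp, prod_comp]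
  refine Finset.prod_congr rfl fun i _ => ?_
  rw [sub_comp, X_comp, C_comp, sub_sub, ← C_add, add_comm]

lemma ffp_eq (n : ℕ) (hn : 1 ≤ n) :
    ffp n = X * (ffp (n - 1)).comp (X - C 1) := by
  obtain ⟨m, rfl⟩ : ∃ m, n = m + 1 := ⟨n - 1, (Nat.succ_pred_eq_of_pos hn).symm⟩
  rw [Nat.add_sub_cancel, comp_ffp, ffp, Finset.prod_range_succ']
  push_cast
  simp [mul_comm]

lemma ffp_comp (n : ℕ) (hn : 1 ≤ n) :
    (ffp n).comp (X - C 1) = (ffp (n - 1)).comp (X - C 1) * (X - C (n : ℂ)) := by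
  obtain ⟨m, rfl⟩ : ∃ m, n = m + 1 := ⟨n - 1, (Nat.succ_pred_eq_of_pos hn).symm⟩
  rw [Nat.add_sub_cancel, comp_ffp, comp_ffp, Finset.prod_range_succ]
  push_cast
  ring

lemma T_pow (n d : ℕ) :
    T n (X ^ d) =
      ((X - C 1) ^ d - X ^ d) * (X - C (n : ℂ)) - C (n : ℂ) * X ^ d := by
  rw [T, pow_comp, X_comp]
  ring


lemma natDegree_r (d : ℕ) : ((X - C (1 : ℂ)) ^ d - X ^ d).natDegree ≤ d - 1 := by
  by_cases h0 : ((X - C (1 : ℂ)) ^ d - X ^ d) = 0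
  · rw [h0]; simp
  · have h1 : ((X - C (1 : ℂ)) ^ d).degree = (d : WithBot ℕ) := by
      rw [degree_pow, degree_X_sub_C]; simp
    have hlt := degree_sub_lt (h1.trans (degree_X_pow d).symm)
      (pow_ne_zero _ (X_sub_C_ne_zero 1))
      (by rw [((monic_X_sub_C (1 : ℂ)).pow d).leadingCoeff, (monic_X_pow d).leadingCoeff])
    rw [h1] at hlt
    have := (natDegree_lt_iff_degree_lt h0).2 hlt
    omega

lemma T_natDegree (n d : ℕ) : (T n (X ^ d)).natDegree ≤ d := by
  rcases Nat.eq_zero_or_pos d with rfl | hd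
  · rw [T_pow]; simp
  · rw [T_pow]
    have hr := natDegree_r d
    refine le_trans (natDegree_sub_le _ _) (max_le ?_ ?_)
    · refine le_trans (natDegree_mul_le) ?_
      have : (X - C (n : ℂ)).natDegree = 1 := natDegree_X_sub_C _
      omega
    · refine le_trans (natDegree_mul_le) ?_
      simp


lemma coeff_r (d : ℕ) :
    ((X - C (1 : ℂ)) ^ (d + 1) - X ^ (d + 1)).coeff d = -((d : ℂ) + 1) := by
  rw [coeff_sub, coeff_X_pow, if_neg (by omega)]
  have h1 : ((X - C (1 : ℂ)) ^ (d + 1)).natDegree = d + 1 := by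
    rw [natDegree_pow, natDegree_X_sub_C, mul_one]
  have h2 : ((X - C (1 : ℂ)) ^ (d + 1)).nextCoeff = (d + 1) • (-1 : ℂ) := by
    rw [(monic_X_sub_C (1 : ℂ)).nextCoeff_pow, nextCoeff_X_sub_C]
  rw [nextCoeff_of_natDegree_pos (by omega : 0 < ((X - C (1 : ℂ)) ^ (d + 1)).natDegree),
    h1] at h2
  simpa using h2


lemma T_coeff (n d : ℕ) : (T n (X ^ d)).coeff d = -((n : ℂ) + d) := by
  rcases Nat.eq_zero_or_pos d with rfl | hd
  · rw [T_pow]; simp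
  · obtain ⟨m, rfl⟩ : ∃ m, d = m + 1 := ⟨d - 1, by omega⟩
    rw [T_pow, coeff_sub]
    have hrdeg := natDegree_r (m + 1)
    have hzero : ((X - C (1 : ℂ)) ^ (m + 1) - X ^ (m + 1)).coeff (m + 1) = 0 :=
      coeff_eq_zero_of_natDegree_lt (by omega)
    have hmul : (((X - C (1 : ℂ)) ^ (m + 1) - X ^ (m + 1)) * (X - C (n : ℂ))).coeff (m + 1)
        = -((m : ℂ) + 1) := by
      rw [mul_sub, mul_comm _ (C (n : ℂ)), coeff_sub, coeff_C_mul, hzero, mul_zero, sub_zero,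
        coeff_mul_X, coeff_r m]
    rw [hmul, coeff_C_mul, coeff_X_pow, if_pos rfl]
    push_cast
    ring


lemma mem_span_T (n : ℕ) (hn : 1 ≤ n) (d : ℕ) :
    ∀ p : ℂ[X], p.natDegree ≤ d → p ∈ Submodule.span ℂ (Set.range (T n)) := by
  have hn0 : (n : ℂ) ≠ 0 := Nat.cast_ne_zero.2 (by omega)
  induction d with
  | zero =>
    intro p hp
    have hT1 : T n (1 : ℂ[X]) = -C (n : ℂ) := by simp [T]
    have hp' : p = C (p.coeff 0) := eq_C_of_natDegree_le_zero hp
    have : p = (-(p.coeff 0) / (n : ℂ)) • T n 1 := by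
      rw [hT1, hp', smul_neg, Polynomial.smul_C, smul_eq_mul]
      rw [← C_neg]
      congr 1
      field_simp
      simp
    rw [this]
    exact Submodule.smul_mem _ _ (Submodule.subset_span ⟨1, rfl⟩)
  | succ d ih =>
    intro p hp
    have hcne : -((n : ℂ) + (d + 1 : ℕ)) ≠ 0 := by
      rw [neg_ne_zero, ← Nat.cast_add]
      exact Nat.cast_ne_zero.2 (by omega)
    set c : ℂ := p.coeff (d + 1) / (-((n : ℂ) + (d + 1 : ℕ))) with hc
    have hq : (p - c • T n (X ^ (d + 1))).natDegree ≤ d := by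
      rw [natDegree_le_iff_coeff_eq_zero]
      intro m hm
      rw [coeff_sub, coeff_smul, smul_eq_mul]
      rcases eq_or_lt_of_le (Nat.succ_le_of_lt hm) with h | h
      · rw [← h, T_coeff n (d + 1), hc, div_mul_cancel₀ _ hcne, sub_self]
      · rw [coeff_eq_zero_of_natDegree_lt (lt_of_le_of_lt hp h),
          coeff_eq_zero_of_natDegree_lt (lt_of_le_of_lt (T_natDegree n (d + 1)) h)]
        ring
    have : p = (p - c • T n (X ^ (d + 1))) + c • T n (X ^ (d + 1)) := by ring
    rw [this]
    exact Submodule.add_mem _ (ih _ hq)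
      (Submodule.smul_mem _ _ (Submodule.subset_span ⟨X ^ (d + 1), rfl⟩))

end Stmt10Aux

open Stmt10Aux in
/-- `A_{n,1} = [w−1]_{n−1}·ℂ[w]`, the ideal generated by
`(w−1)(w−2)⋯(w−n+1)`. -/
theorem stmt10 (n : ℕ) (hn : 1 ≤ n) :
    Ank n 1 = (Ideal.span {(ffp (n - 1)).comp (X - C 1)}).restrictScalars ℂ := by
  set g : ℂ[X] := (ffp (n - 1)).comp (X - C 1) with hg
  apply le_antisymm
  · rw [Ank, Submodule.span_le]
    rintro p ⟨f, rfl⟩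
    rw [SetLike.mem_coe, Submodule.restrictScalars_mem, Ideal.mem_span_singleton]
    refine ⟨f.comp (X - C 1) * (X - C (n : ℂ)) - f * X, ?_⟩
    rw [Nat.cast_one, ffp_comp n hn, ffp_eq n hn, ← hg]
    ring
  · intro p hp
    rw [Submodule.restrictScalars_mem, Ideal.mem_span_singleton] at hp
    obtain ⟨h, rfl⟩ := hp
    have hh : h ∈ Submodule.span ℂ (Set.range (T n)) :=
      mem_span_T n hn h.natDegree h le_rfl
    have hmap : g * h ∈ Submodule.map (LinearMap.mulLeft ℂ g)
        (Submodule.span ℂ (Set.range (T n))) :=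
      ⟨h, hh, by simp [LinearMap.mulLeft_apply]⟩
    rw [Submodule.map_span] at hmap
    refine Submodule.span_le.2 ?_ hmap
    rintro q ⟨_, ⟨f, rfl⟩, rfl⟩
    apply Submodule.subset_span
    refine ⟨f, ?_⟩
    rw [LinearMap.mulLeft_apply, T, Nat.cast_one, ffp_comp n hn, ffp_eq n hn, ← hg]
    ring
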